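/- For every Sperner-admissible labeling ℓ : V_{k,q} → {1,…,k} (with k ≥ 2, q ≥ 1), the number of lattice points b ∈ V_{k,q-1} for which the cell e(b) is non-monochromatic under ℓ is at least the binomial coefficient C(q+k-3, k-2). -/

import Mathlib

open Finset

lemma count_key {k : ℕ} (b : Fin k → ℕ) (a : Fin k) :
    Multiset.count a (∑ t : Fin k, b t • ({t} : Multiset (Fin k))) = b a := by
  rw [Multiset.count_sum']
  simp [Multiset.count_singleton]

lemma card_antidiagonalTuple (k n : ℕ) :
    (Finset.Nat.antidiagonalTuple k n).card = (k + n - 1).choose n := by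
  rw [show (k + n - 1).choose n = (Fintype.card (Fin k) + n - 1).choose n by
        rw [Fintype.card_fin], ← Sym.card_sym_eq_choose (α := Fin k) n]
  apply Finset.card_eq_of_equiv_fintype
  refine ⟨fun x => ⟨∑ t : Fin k, x.1 t • ({t} : Multiset (Fin k)), ?_⟩,
          fun s => ⟨fun t => Multiset.count t (s : Multiset (Fin k)), ?_⟩, ?_, ?_⟩
  · have hx := Finset.Nat.mem_antidiagonalTuple.mp x.2
    simp [Multiset.card_singleton, hx]
  · rw [Finset.Nat.mem_antidiagonalTuple]
    rw [Multiset.sum_count_eq_card (fun a _ => Finset.mem_univ a)]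
    exact s.2
  · intro x
    ext t
    exact count_key x.1 t
  · intro s
    apply Subtype.ext
    apply Multiset.ext.mpr
    intro a
    exact count_key _ a

/-- For every Sperner-admissible labeling `ℓ : V_{k,q} → {1,…,k}` (with
`k ≥ 2`, `q ≥ 1`), the number of lattice points `b ∈ V_{k,q-1}` whose cell
`e(b) = {b + e_1, …, b + e_k}` is non-monochromatic under `ℓ` is at least
`C(q+k-3, k-2)`. -/
theorem sperner_lattice_coloring_lower_bound (k q : ℕ) (hk : 2 ≤ k) (hq : 1 ≤ q)
    (ℓ : (Fin k → ℕ) → Fin k)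
    (hℓ : ∀ a : Fin k → ℕ, (∑ i, a i) = q → 0 < a (ℓ a)) :
    Nat.choose (q + k - 3) (k - 2) ≤
      ((Finset.Nat.antidiagonalTuple k (q - 1)).filter fun b =>
        ∃ i j : Fin k,
          ℓ (fun t => b t + if t = i then 1 else 0) ≠
            ℓ (fun t => b t + if t = j then 1 else 0)).card := by
  obtain ⟨k', rfl⟩ : ∃ k', k = k' + 2 := ⟨k - 2, by omega⟩
  have hsum : ∀ b : Fin (k' + 2) → ℕ, (∑ t, b t) = q - 1 → ∀ i : Fin (k' + 2),
      (∑ t, (b t + if t = i then 1 else 0)) = q := by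
    intro b hb i
    rw [Finset.sum_add_distrib, hb]
    have h1 : (∑ t : Fin (k' + 2), if t = i then 1 else 0) = 1 := by simp
    omega
  have hz01 : (0 : Fin (k' + 2)) ≠ 1 := by
    intro h
    have := Fin.val_eq_of_eq h
    simp at this
  rcases Nat.lt_or_ge q 2 with h1 | h2
  · -- q = 1
    obtain rfl : q = 1 := by omega
    have hz : ∀ i : Fin (k' + 2),
        ℓ (fun t => (0 : Fin (k' + 2) → ℕ) t + if t = i then 1 else 0) = i := by
      intro i
      by_contra hne
      have h := hℓ (fun t => (0 : Fin (k' + 2) → ℕ) t + if t = i then 1 else 0)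
        (hsum 0 (by simp) i)
      have h2 : (0 : ℕ) <
          (0 : Fin (k' + 2) → ℕ) (ℓ (fun t => (0 : Fin (k' + 2) → ℕ) t + if t = i then 1 else 0))
          + if (ℓ (fun t => (0 : Fin (k' + 2) → ℕ) t + if t = i then 1 else 0)) = i
            then 1 else 0 := h
      rw [if_neg hne] at h2
      simp at h2
    have harith : Nat.choose (1 + (k' + 2) - 3) (k' + 2 - 2) = 1 := by
      have e1 : 1 + (k' + 2) - 3 = k' := by omega
      have e2 : k' + 2 - 2 = k' := by omega
      rw [e1, e2, Nat.choose_self]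
    have hmem : (0 : Fin (k' + 2) → ℕ) ∈
        ((Finset.Nat.antidiagonalTuple (k' + 2) (1 - 1)).filter fun b =>
          ∃ i j : Fin (k' + 2),
            ℓ (fun t => b t + if t = i then 1 else 0) ≠
              ℓ (fun t => b t + if t = j then 1 else 0)) := by
      rw [Finset.mem_filter]
      refine ⟨by rw [Finset.Nat.mem_antidiagonalTuple]; simp, 0, 1, ?_⟩
      rw [hz 0, hz 1]
      exact hz01
    have hcard : 1 ≤
        ((Finset.Nat.antidiagonalTuple (k' + 2) (1 - 1)).filter fun b =>
          ∃ i j : Fin (k' + 2),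
            ℓ (fun t => b t + if t = i then 1 else 0) ≠
              ℓ (fun t => b t + if t = j then 1 else 0)).card :=
      Finset.card_pos.mpr ⟨0, hmem⟩
    rw [harith]
    exact hcard
  · -- q ≥ 2
    obtain ⟨q', rfl⟩ : ∃ q', q = q' + 2 := ⟨q - 2, by omega⟩
    set S := Finset.Nat.antidiagonalTuple (k' + 2) (q' + 2 - 1) with hS
    set P : (Fin (k' + 2) → ℕ) → Prop := fun b =>
      ∃ i j : Fin (k' + 2),
        ℓ (fun t => b t + if t = i then 1 else 0) ≠
          ℓ (fun t => b t + if t = j then 1 else 0) with hP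
    set cB : (Fin (k' + 2) → ℕ) → Fin (k' + 2) :=
      fun b => ℓ (fun t => b t + if t = (0 : Fin (k' + 2)) then 1 else 0) with hcB
    have key : ∀ b ∈ S.filter (fun b => ¬ P b),
        (∀ i : Fin (k' + 2), ℓ (fun t => b t + if t = i then 1 else 0) = cB b)
          ∧ 1 ≤ b (cB b) := by
      intro b hb
      rw [Finset.mem_filter] at hb
      obtain ⟨hbS, hbP⟩ := hb
      simp only [hP] at hbP
      push_neg at hbP
      have hbsum := Finset.Nat.mem_antidiagonalTuple.mp hbS
      have hlab : ∀ i : Fin (k' + 2), ℓ (fun t => b t + if t = i then 1 else 0) = cB b :=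
        fun i => hbP i 0
      refine ⟨hlab, ?_⟩
      set j : Fin (k' + 2) := if cB b = 0 then 1 else 0 with hj
      have hjne : cB b ≠ j := by
        rw [hj]; split_ifs with h
        · rw [h]; exact hz01
        · exact h
      have h := hℓ (fun t => b t + if t = j then 1 else 0) (hsum b hbsum j)
      rw [hlab j] at h
      have h2 : (0 : ℕ) < b (cB b) + if cB b = j then 1 else 0 := h
      rw [if_neg hjne] at h2
      omega
    have hinj : (S.filter (fun b => ¬ P b)).card ≤
        (Finset.Nat.antidiagonalTuple (k' + 2) q').card := by
      apply Finset.card_le_card_of_injOn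
        (fun b => fun t => b t - if t = cB b then 1 else 0)
      · intro b hb
        obtain ⟨hlab, hpos⟩ := key b hb
        have hbsum := Finset.Nat.mem_antidiagonalTuple.mp (Finset.mem_filter.mp hb).1
        simp only [Finset.mem_coe, Finset.Nat.mem_antidiagonalTuple]
        have step : ∀ t : Fin (k' + 2),
            (b t - if t = cB b then 1 else 0) + (if t = cB b then 1 else 0) = b t := by
          intro t; split_ifs with h
          · subst h; omega
          · omega
        have hsum2 : (∑ t, ((b t - if t = cB b then 1 else 0) + if t = cB b then 1 else 0))
            = q' + 2 - 1 := by
          rw [Finset.sum_congr rfl (fun t _ => step t)]; exact hbsum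
        rw [Finset.sum_add_distrib] at hsum2
        have h1 : (∑ t : Fin (k' + 2), if t = cB b then 1 else 0) = 1 := by simp
        omega
      · intro b hb b' hb' heq
        obtain ⟨hlab, hpos⟩ := key b hb
        obtain ⟨hlab', hpos'⟩ := key b' hb'
        by_cases hcc : cB b = cB b'
        · funext t
          have h1 := congrFun heq t
          simp only at h1
          rw [← hcc] at h1
          rw [← hcc] at hpos'
          by_cases ht : t = cB b
          · subst ht; rw [if_pos rfl] at h1; omega
          · rw [if_neg ht] at h1; omega
        · exfalso
          have hv : (fun t => b t + if t = cB b' then 1 else 0)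
              = (fun t => b' t + if t = cB b then 1 else 0) := by
            funext t
            have e := congrFun heq t
            simp only at e
            by_cases ht1 : t = cB b
            · subst ht1
              rw [if_pos rfl] at e
              rw [if_neg hcc] at e
              rw [if_neg hcc, if_pos rfl]
              omega
            · rw [if_neg ht1] at e
              rw [if_neg ht1]
              by_cases ht2 : t = cB b'
              · subst ht2
                rw [if_pos rfl] at e ⊢
                omega
              · rw [if_neg ht2] at e ⊢
                omega
          have e1 : ℓ (fun t => b t + if t = cB b' then 1 else 0) = cB b := hlab (cB b')
          have e2 : ℓ (fun t => b' t + if t = cB b then 1 else 0) = cB b' := hlab' (cB b)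
          rw [hv, e2] at e1
          exact hcc e1.symm
    have hsplit : (S.filter P).card + (S.filter (fun b => ¬ P b)).card = S.card :=
      Finset.card_filter_add_card_filter_not P
    have hScard : S.card = (q' + k' + 2).choose (k' + 1) := by
      rw [hS, card_antidiagonalTuple]
      rw [show (k' + 2) + (q' + 2 - 1) - 1 = q' + k' + 2 by omega,
        show (q' + 2 - 1 : ℕ) = q' + 1 by omega]
      rw [← Nat.choose_symm (by omega : q' + 1 ≤ q' + k' + 2)]
      congr 1
      omega
    have hMcard : (Finset.Nat.antidiagonalTuple (k' + 2) q').card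
        = (q' + k' + 1).choose (k' + 1) := by
      rw [card_antidiagonalTuple]
      rw [show k' + 2 + q' - 1 = q' + k' + 1 by omega]
      rw [← Nat.choose_symm (by omega : q' ≤ q' + k' + 1)]
      congr 1
      omega
    have hPascal : (q' + k' + 2).choose (k' + 1)
        = (q' + k' + 1).choose k' + (q' + k' + 1).choose (k' + 1) :=
      Nat.choose_succ_succ (q' + k' + 1) k'
    have hgoal : Nat.choose (q' + 2 + (k' + 2) - 3) (k' + 2 - 2) = (q' + k' + 1).choose k' := by
      have e1 : q' + 2 + (k' + 2) - 3 = q' + k' + 1 := by omega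
      have e2 : k' + 2 - 2 = k' := by omega
      rw [e1, e2]
    rw [hgoal]
    have h3 : (S.filter (fun b => ¬ P b)).card ≤ (q' + k' + 1).choose (k' + 1) :=
      hMcard ▸ hinj
    have h4 : (S.filter P).card + (S.filter (fun b => ¬ P b)).card
        = (q' + k' + 1).choose k' + (q' + k' + 1).choose (k' + 1) := by
      rw [hsplit, hScard, hPascal]
    have h5 : (q' + k' + 1).choose k' + (S.filter (fun b => ¬ P b)).card
        ≤ (q' + k' + 1).choose k' + (q' + k' + 1).choose (k' + 1) :=
      Nat.add_le_add_left h3 _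
    rw [← h4] at h5
    exact Nat.le_of_add_le_add_right h5
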